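/- Let V be a finite-dimensional real inner product space, W a 2-dimensional real inner product space, and α: V × V → W a symmetric bilinear form with third fundamental form III(X,Y) = Σᵢ ⟨α(X,Xᵢ), α(Y,Xᵢ)⟩ for an orthonormal basis X₁,…,Xₙ of V. If III = (1/r²)⟨·,·⟩, then for any orthonormal basis {ξ₁, ξ₂} of W the operators A_{ξ₁}² and A_{ξ₂}² commute, i.e. they are simultaneously diagonalizable. -/

import Mathlib

open scoped RealInnerProductSpace

/-- If the third fundamental form of α is (1/r²)·⟨·,·⟩, then the squares of the shape
operators with respect to any orthonormal basis of W commute. -/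
theorem shape_operator_squares_commute
    (V W : Type*) [NormedAddCommGroup V] [InnerProductSpace ℝ V] [FiniteDimensional ℝ V]
    [NormedAddCommGroup W] [InnerProductSpace ℝ W] [FiniteDimensional ℝ W]
    (hW : Module.finrank ℝ W = 2)
    (n : ℕ) (b : OrthonormalBasis (Fin n) ℝ V)
    (α : V →ₗ[ℝ] V →ₗ[ℝ] W) (hsymm : ∀ X Y : V, α X Y = α Y X)
    (A : W → V →ₗ[ℝ] V)
    (hA : ∀ (ξ : W) (X Y : V), ⟪A ξ X, Y⟫ = ⟪α X Y, ξ⟫)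
    (r : ℝ) (hr : 0 < r)
    (hIII : ∀ X Y : V, ∑ i, ⟪α X (b i), α Y (b i)⟫ = (1 / r ^ 2) * ⟪X, Y⟫) :
    ∀ ξ₁ ξ₂ : W, ‖ξ₁‖ = 1 → ‖ξ₂‖ = 1 → ⟪ξ₁, ξ₂⟫ = 0 →
      (A ξ₁ ∘ₗ A ξ₁) ∘ₗ (A ξ₂ ∘ₗ A ξ₂) = (A ξ₂ ∘ₗ A ξ₂) ∘ₗ (A ξ₁ ∘ₗ A ξ₁) := by
  intro ξ₁ ξ₂ h1 h2 h12
  -- the family ![ξ₁, ξ₂] is orthonormal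
  have horth : Orthonormal ℝ ![ξ₁, ξ₂] := by
    rw [orthonormal_iff_ite]
    intro i j
    fin_cases i <;> fin_cases j <;>
      simp_all [real_inner_self_eq_norm_sq, real_inner_comm ξ₂ ξ₁]
  -- an orthonormal basis of W
  have hcard : Fintype.card (Fin 2) = Module.finrank ℝ W := by simp [hW]
  let cb : Module.Basis (Fin 2) ℝ W := basisOfOrthonormalOfCardEqFinrank horth hcard
  have hcb : ⇑cb = ![ξ₁, ξ₂] := coe_basisOfOrthonormalOfCardEqFinrank horth hcard
  let c : OrthonormalBasis (Fin 2) ℝ W := cb.toOrthonormalBasis (by rwa [hcb])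
  have hc : ∀ i, c i = ![ξ₁, ξ₂] i := by
    intro i
    simp only [c, Module.Basis.coe_toOrthonormalBasis, hcb]
  -- key identity: A ξ₁ (A ξ₁ X) + A ξ₂ (A ξ₂ X) = (1/r²) • X
  have key : ∀ X : V, A ξ₁ (A ξ₁ X) + A ξ₂ (A ξ₂ X) = (1 / r ^ 2) • X := by
    intro X
    apply ext_inner_right ℝ
    intro Y
    have expand : ∀ i : Fin n,
        ⟪α X (b i), α Y (b i)⟫ = ⟪A ξ₁ X, b i⟫ * ⟪A ξ₁ Y, b i⟫
          + ⟪A ξ₂ X, b i⟫ * ⟪A ξ₂ Y, b i⟫ := by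
      intro i
      have := c.sum_inner_mul_inner (α X (b i)) (α Y (b i))
      rw [Fin.sum_univ_two, hc 0, hc 1] at this
      simp only [Matrix.cons_val_zero, Matrix.cons_val_one, Matrix.head_cons] at this
      rw [← this, hA ξ₁ X (b i), hA ξ₁ Y (b i), hA ξ₂ X (b i), hA ξ₂ Y (b i),
        real_inner_comm ξ₁ (α Y (b i)), real_inner_comm ξ₂ (α Y (b i))]
    have sum1 : ∀ ξ : W, ∑ i, ⟪A ξ X, b i⟫ * ⟪A ξ Y, b i⟫ = ⟪A ξ X, A ξ Y⟫ := by
      intro ξ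
      have := b.sum_inner_mul_inner (A ξ X) (A ξ Y)
      rw [← this]
      congr 1; ext i; rw [real_inner_comm (b i) (A ξ Y)]
    have hIII' := hIII X Y
    simp only [expand] at hIII'
    rw [Finset.sum_add_distrib, sum1 ξ₁, sum1 ξ₂] at hIII'
    have selfadj : ∀ ξ : W, ⟪A ξ X, A ξ Y⟫ = ⟪A ξ (A ξ X), Y⟫ := by
      intro ξ
      rw [hA ξ (A ξ X) Y, hsymm (A ξ X) Y, ← hA ξ Y (A ξ X), real_inner_comm]
    rw [selfadj ξ₁, selfadj ξ₂] at hIII'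
    rw [inner_add_left, hIII', real_inner_smul_left]
  -- conclude commutativity
  ext X
  simp only [LinearMap.comp_apply, LinearMap.coe_comp, Function.comp_apply]
  have h2X : A ξ₂ (A ξ₂ X) = (1 / r ^ 2) • X - A ξ₁ (A ξ₁ X) := by
    rw [← key X]; abel
  have h2X' : ∀ Z : V, A ξ₂ (A ξ₂ Z) = (1 / r ^ 2) • Z - A ξ₁ (A ξ₁ Z) := by
    intro Z; rw [← key Z]; abel
  rw [h2X', h2X']
  simp only [map_sub, map_smul, h2X']
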